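/- arXiv:1310.4093 — 2 statements merged into one kernel-verified Lean document; each statement's English description precedes it below -/
import Mathlib

section
/- Fix a set partition π of a set of positive integers. Let T be a π-increasing tree (an increasing tree whose vertex set is a union of blocks of π such that every block contained in the vertex set forms a chain of ancestors in T) with maximum vertex v. If T is irreducible (i.e., the v-dependence graph G_v(T) is connected), then G_v(T) is a directed tree rooted at the block containing v, with all edges directed towards the root. -/
open scoped Classical

/-- An unordered increasing tree on a finite set of positive integers,
given by its vertex set and parent function: the root is the minimum vertex
and is fixed by `parent`, and every nonroot vertex has a parent in the tree
with strictly smaller label (so labels increase away from the root). -/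
structure ITree : Type where
  verts : Finset ℕ
  parent : ℕ → ℕ
  pos : ∀ v ∈ verts, 0 < v
  parent_root : ∀ v ∈ verts, (∀ u ∈ verts, v ≤ u) → parent v = v
  parent_lt : ∀ v ∈ verts, ¬(∀ u ∈ verts, v ≤ u) → parent v ∈ verts ∧ parent v < v

/-- `a` is an ancestor of `v` in `T` (this includes `a = v`): some iterate of
the parent function sends `v` to `a`. -/
def Ancestor (T : ITree) (a v : ℕ) : Prop := ∃ k : ℕ, T.parent^[k] v = a

/-- The chain from the root of `T` to `v`: the set of ancestors of `v`. -/
noncomputable def chain (T : ITree) (v : ℕ) : Finset ℕ :=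
  T.verts.filter (fun a => Ancestor T a v)

/-- The number of sons of the vertex `i` in `T`. -/
noncomputable def sons (T : ITree) (i : ℕ) : ℕ :=
  (T.verts.filter (fun v => v ≠ i ∧ T.parent v = i)).card

/-- `R = splice(T₁, v₁; T₂, v₂)`: the increasing tree on the union of the
vertex sets obtained by merging the chain from the root of `T₁` to `v₁` with
the chain from the root of `T₂` to `v₂` into a single increasing chain
(each chain vertex having as parent its predecessor in the merged chain),
all other vertices keeping their parent.  This is exactly the interleaving of
the `v₁`-decomposition of `T₁` and the `v₂`-decomposition of `T₂` so that the
roots along the resulting chain increase. -/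
def IsSplice (T₁ : ITree) (v₁ : ℕ) (T₂ : ITree) (v₂ : ℕ) (R : ITree) : Prop :=
  R.verts = T₁.verts ∪ T₂.verts ∧
  (∀ w ∈ T₁.verts, w ∉ chain T₁ v₁ ∪ chain T₂ v₂ → R.parent w = T₁.parent w) ∧
  (∀ w ∈ T₂.verts, w ∉ chain T₁ v₁ ∪ chain T₂ v₂ → R.parent w = T₂.parent w) ∧
  (∀ w ∈ chain T₁ v₁ ∪ chain T₂ v₂,
    ∀ h : ((chain T₁ v₁ ∪ chain T₂ v₂).filter (· < w)).Nonempty,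
      R.parent w = ((chain T₁ v₁ ∪ chain T₂ v₂).filter (· < w)).max' h)

/-- `π` is a set partition of a set of positive integers: its blocks are
nonempty, consist of positive integers, and are pairwise disjoint. -/
def IsPartition (π : Finset (Finset ℕ)) : Prop :=
  (∀ B ∈ π, B.Nonempty) ∧ (∀ B ∈ π, ∀ b ∈ B, 0 < b) ∧
    (∀ B ∈ π, ∀ B' ∈ π, B ≠ B' → Disjoint B B')

/-- `T` is a `π`-increasing tree: its vertex set is a union of blocks of `π`,
and every block contained in the vertex set forms a chain of ancestors in `T`
(for `i < j` in the same block, `i` is an ancestor of `j`). -/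
def PiIncreasing (π : Finset (Finset ℕ)) (T : ITree) : Prop :=
  (∀ v ∈ T.verts, ∃ B ∈ π, v ∈ B ∧ B ⊆ T.verts) ∧
  (∀ B ∈ π, B ⊆ T.verts → ∀ i ∈ B, ∀ j ∈ B, i ≤ j → Ancestor T i j)

/-- The edge relation of the `v`-dependence graph `G_v(T)` (on the blocks of
`π` contained in `V(T)`): there is an edge from `B` to `B'` when the maximum
`μ` of `B` does not lie on the chain from the root of `T` to `v`, and the
piece of the `v`-decomposition of `T` containing `μ` (as a nonroot vertex) is
rooted at a vertex `a ∈ B'`; the root `a` of that piece is the largest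
ancestor of `v` which is also an ancestor of `μ`. -/
def DepEdge (π : Finset (Finset ℕ)) (T : ITree) (v : ℕ) (B B' : Finset ℕ) : Prop :=
  B ∈ π ∧ B' ∈ π ∧ B ⊆ T.verts ∧ B' ⊆ T.verts ∧
  ∃ hB : B.Nonempty, ¬ Ancestor T (B.max' hB) v ∧
    ∃ a ∈ B', Ancestor T a v ∧ Ancestor T a (B.max' hB) ∧
      ∀ w, Ancestor T w v → Ancestor T w (B.max' hB) → w ≤ a

/-- The `v`-dependence graph `G_v(T)` is connected: any two blocks of `π`
contained in `V(T)` are related by the equivalence closure of the edge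
relation. -/
def DepConnected (π : Finset (Finset ℕ)) (T : ITree) (v : ℕ) : Prop :=
  ∀ B ∈ π, B ⊆ T.verts → ∀ B' ∈ π, B' ⊆ T.verts →
    Relation.EqvGen (DepEdge π T v) B B'

lemma parent_mem_aux (T : ITree) {v : ℕ} (hv : v ∈ T.verts) : T.parent v ∈ T.verts := by
  by_cases h : ∀ u ∈ T.verts, v ≤ u
  · rw [T.parent_root v hv h]; exact hv
  · exact (T.parent_lt v hv h).1

lemma iterate_mem_aux (T : ITree) {v : ℕ} (hv : v ∈ T.verts) (k : ℕ) :
    T.parent^[k] v ∈ T.verts := by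
  induction k with
  | zero => simpa
  | succ n ih => rw [Function.iterate_succ_apply']; exact parent_mem_aux T ih

lemma ancestor_mem_aux (T : ITree) {a v : ℕ} (hv : v ∈ T.verts) (h : Ancestor T a v) :
    a ∈ T.verts := by
  obtain ⟨k, hk⟩ := h
  rw [← hk]; exact iterate_mem_aux T hv k

lemma root_ancestor_aux (T : ITree) (hne : T.verts.Nonempty) :
    ∀ v, v ∈ T.verts → Ancestor T (T.verts.min' hne) v := by
  intro v
  induction v using Nat.strong_induction_on with
  | _ v ih =>
    intro hv
    by_cases h : ∀ u ∈ T.verts, v ≤ u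
    · have hve : v = T.verts.min' hne :=
        le_antisymm (h _ (T.verts.min'_mem hne)) (T.verts.min'_le v hv)
      exact ⟨0, hve⟩
    · obtain ⟨hm, hlt⟩ := T.parent_lt v hv h
      obtain ⟨k, hk⟩ := ih (T.parent v) hlt hm
      exact ⟨k + 1, by rw [Function.iterate_succ_apply]; exact hk⟩

lemma depEdge_unique_aux {π : Finset (Finset ℕ)} (hπ : IsPartition π) {T : ITree} {M : ℕ}
    {B B' B'' : Finset ℕ} (h1 : DepEdge π T M B B') (h2 : DepEdge π T M B B'') :
    B' = B'' := by
  obtain ⟨_, hB'π, _, _, hB1, _, a1, ha1B, ha1M, ha1μ, hmax1⟩ := h1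
  obtain ⟨_, hB''π, _, _, hB2, _, a2, ha2B, ha2M, ha2μ, hmax2⟩ := h2
  have hBB : hB1 = hB2 := Subsingleton.elim _ _
  subst hBB
  have ha : a1 = a2 := le_antisymm (hmax2 a1 ha1M ha1μ) (hmax1 a2 ha2M ha2μ)
  by_contra hne
  exact Finset.disjoint_left.mp (hπ.2.2 B' hB'π B'' hB''π hne) ha1B (ha ▸ ha2B)

lemma reach_invariant_aux {π : Finset (Finset ℕ)} (hπ : IsPartition π) {T : ITree} {M : ℕ}
    {Z : Finset ℕ} (hZ : ∀ Y, ¬ DepEdge π T M Z Y)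
    {X Y : Finset ℕ} (h : Relation.EqvGen (DepEdge π T M) X Y) :
    Relation.ReflTransGen (DepEdge π T M) X Z ↔
      Relation.ReflTransGen (DepEdge π T M) Y Z := by
  induction h with
  | rel X Y hXY =>
    constructor
    · intro hXZ
      rcases hXZ.cases_head with heq | ⟨W, hXW, hWZ⟩
      · exact absurd (heq ▸ hXY) (hZ Y)
      · exact (depEdge_unique_aux hπ hXY hXW) ▸ hWZ
    · intro hYZ
      exact Relation.ReflTransGen.head hXY hYZ
  | refl => exact Iff.rfl
  | symm _ _ _ ih => exact ih.symm
  | trans _ _ _ _ _ ih1 ih2 => exact ih1.trans ih2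

/-- **Lemma 3.4 of Féray–Goulden–Lascoux.**  If a `π`-increasing tree `T` with
maximum vertex `M` is irreducible (its `M`-dependence graph is connected),
then `G_M(T)` is a directed tree rooted at the block `π^M` containing `M`,
with all edges directed towards the root: `π^M` has outdegree `0`, every other
block has a unique outgoing edge, and every block has a directed path to
`π^M`. -/
theorem dependence_graph_is_directed_tree (π : Finset (Finset ℕ)) (T : ITree)
    (hπ : IsPartition π) (hT : PiIncreasing π T) (M : ℕ)
    (hM : M ∈ T.verts) (hMmax : ∀ u ∈ T.verts, u ≤ M)
    (hirr : DepConnected π T M)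
    (BM : Finset ℕ) (hBM : BM ∈ π) (hMBM : M ∈ BM) :
    (∀ B' : Finset ℕ, ¬ DepEdge π T M BM B') ∧
    (∀ B ∈ π, B ⊆ T.verts → B ≠ BM → ∃! B' : Finset ℕ, DepEdge π T M B B') ∧
    (∀ B ∈ π, B ⊆ T.verts → Relation.ReflTransGen (DepEdge π T M) B BM) := by
  -- `BM` is contained in the vertex set
  have hBMsub : BM ⊆ T.verts := by
    obtain ⟨B0, hB0π, hMB0, hB0sub⟩ := hT.1 M hM
    have hEq : B0 = BM := by
      by_contra h
      exact Finset.disjoint_left.mp (hπ.2.2 B0 hB0π BM hBM h) hMB0 hMBM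
    exact hEq ▸ hB0sub
  -- Part 1: no outgoing edge from `BM`
  have part1 : ∀ B' : Finset ℕ, ¬ DepEdge π T M BM B' := by
    rintro B' ⟨_, _, hBsub, _, hB, hne, _⟩
    have hμ : BM.max' hB = M :=
      le_antisymm (hMmax _ (hBsub (BM.max'_mem hB))) (Finset.le_max' _ _ hMBM)
    exact hne (by rw [hμ]; exact ⟨0, rfl⟩)
  -- Part 3: every block reaches `BM`
  have part3 : ∀ B ∈ π, B ⊆ T.verts → Relation.ReflTransGen (DepEdge π T M) B BM := by
    intro B hBπ hBsub
    have h := hirr B hBπ hBsub BM hBM hBMsub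
    exact (reach_invariant_aux hπ part1 h).mpr Relation.ReflTransGen.refl
  refine ⟨part1, ?_, part3⟩
  -- Part 2: existence and uniqueness of the outgoing edge
  intro B hBπ hBsub hBne
  have hB : B.Nonempty := hπ.1 B hBπ
  set μ := B.max' hB with hμdef
  have hμmem : μ ∈ T.verts := hBsub (B.max'_mem hB)
  -- the max of `B` is not on the chain to `M`
  have hnA : ¬ Ancestor T μ M := by
    intro hA
    have hnoout : ∀ Y, ¬ DepEdge π T M B Y := by
      rintro Y ⟨_, _, _, _, hB', hne, _⟩
      have : hB' = hB := Subsingleton.elim _ _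
      exact hne (this ▸ hA)
    have h := hirr BM hBM hBMsub B hBπ hBsub
    have h2 := (reach_invariant_aux hπ hnoout h).mpr Relation.ReflTransGen.refl
    rcases h2.cases_head with heq | ⟨W, hW, _⟩
    · exact hBne heq.symm
    · exact part1 W hW
  -- the largest common ancestor of `μ` and `M`
  set A : Finset ℕ := T.verts.filter (fun w => Ancestor T w M ∧ Ancestor T w μ) with hAdef
  have hvne : T.verts.Nonempty := ⟨M, hM⟩
  have hAne : A.Nonempty := by
    refine ⟨T.verts.min' hvne, Finset.mem_filter.mpr ⟨T.verts.min'_mem hvne, ?_, ?_⟩⟩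
    · exact root_ancestor_aux T hvne M hM
    · exact root_ancestor_aux T hvne μ hμmem
  set a := A.max' hAne with hadef
  obtain ⟨haV, haM, haμ⟩ := Finset.mem_filter.mp (A.max'_mem hAne)
  have hamax : ∀ w, Ancestor T w M → Ancestor T w μ → w ≤ a := by
    intro w hwM hwμ
    exact Finset.le_max' A w (Finset.mem_filter.mpr ⟨ancestor_mem_aux T hM hwM, hwM, hwμ⟩)
  obtain ⟨B', hB'π, haB', hB'sub⟩ := hT.1 a haV
  refine ⟨B', ⟨hBπ, hB'π, hBsub, hB'sub, hB, hnA, a, haB', haM, haμ, hamax⟩, ?_⟩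
  intro Y hY
  exact depEdge_unique_aux hπ hY ⟨hBπ, hB'π, hBsub, hB'sub, hB, hnA, a, haB', haM, haμ, hamax⟩
end

section
/- Let T_1, T_2 be π-increasing trees with disjoint vertex sets, with maximum vertices m_1 and m_2 respectively, T_1 irreducible, and v_2 a vertex of T_2 with v_2 < m_1. Set T = splice(T_1, m_1; T_2, v_2). If m_1 > m_2, then T is reducible; more precisely, the m_1-dependence graph of T is the disjoint union of the m_1-dependence graph of T_1 and the v_2-dependence graph of T_2. -/
open scoped Classical

set_option linter.unusedSectionVars false

lemma parent_mem (T : ITree) {v : ℕ} (hv : v ∈ T.verts) :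
    T.parent v ∈ T.verts ∧ T.parent v ≤ v := by
  by_cases h : ∀ u ∈ T.verts, v ≤ u
  · rw [T.parent_root v hv h]; exact ⟨hv, le_refl v⟩
  · exact ⟨(T.parent_lt v hv h).1, le_of_lt (T.parent_lt v hv h).2⟩

lemma iter_mem (T : ITree) {v : ℕ} (hv : v ∈ T.verts) (k : ℕ) :
    T.parent^[k] v ∈ T.verts ∧ T.parent^[k] v ≤ v := by
  induction k with
  | zero => exact ⟨hv, le_refl v⟩
  | succ n ih =>
    rw [Function.iterate_succ_apply']
    exact ⟨(parent_mem T ih.1).1, le_trans (parent_mem T ih.1).2 ih.2⟩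

lemma ancestor_refl (T : ITree) (v : ℕ) : Ancestor T v v := ⟨0, rfl⟩

lemma ancestor_mem {T : ITree} {a v : ℕ} (h : Ancestor T a v) (hv : v ∈ T.verts) :
    a ∈ T.verts := by obtain ⟨k, rfl⟩ := h; exact (iter_mem T hv k).1

lemma ancestor_le {T : ITree} {a v : ℕ} (h : Ancestor T a v) (hv : v ∈ T.verts) :
    a ≤ v := by obtain ⟨k, rfl⟩ := h; exact (iter_mem T hv k).2

lemma ancestor_trans {T : ITree} {a b c : ℕ} (h1 : Ancestor T a b) (h2 : Ancestor T b c) :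
    Ancestor T a c := by
  obtain ⟨k, rfl⟩ := h1; obtain ⟨j, rfl⟩ := h2
  exact ⟨k + j, (Function.iterate_add_apply _ k j c)⟩

lemma ancestor_parent (T : ITree) (v : ℕ) : Ancestor T (T.parent v) v := ⟨1, rfl⟩

lemma ancestor_peel {T : ITree} {a v : ℕ} (h : Ancestor T a v) (hne : a ≠ v) :
    Ancestor T a (T.parent v) := by
  obtain ⟨k, hk⟩ := h
  cases k with
  | zero => exact absurd hk.symm hne
  | succ n => exact ⟨n, by rw [Function.iterate_succ_apply] at hk; exact hk⟩

lemma min_ancestor (T : ITree) (hne : T.verts.Nonempty) :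
    ∀ v ∈ T.verts, Ancestor T (T.verts.min' hne) v := by
  intro v
  induction v using Nat.strong_induction_on with
  | _ v ih =>
    intro hv
    by_cases h : ∀ u ∈ T.verts, v ≤ u
    · have : v = T.verts.min' hne :=
        le_antisymm (h _ (T.verts.min'_mem hne)) (T.verts.min'_le v hv)
      exact this ▸ ancestor_refl T v
    · obtain ⟨hp, hplt⟩ := T.parent_lt v hv h
      exact ancestor_trans (ih _ hplt hp) (ancestor_parent T v)

lemma mem_chain {T : ITree} {a v : ℕ} :
    a ∈ chain T v ↔ a ∈ T.verts ∧ Ancestor T a v := Finset.mem_filter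

lemma chain_inter_ne (S : ITree) {t μ : ℕ} (ht : t ∈ S.verts) (hμ : μ ∈ S.verts) :
    (chain S t ∩ chain S μ).Nonempty := by
  have hne : S.verts.Nonempty := ⟨t, ht⟩
  refine ⟨S.verts.min' hne, Finset.mem_inter.2 ⟨?_, ?_⟩⟩
  · exact mem_chain.2 ⟨S.verts.min'_mem hne, min_ancestor S hne t ht⟩
  · exact mem_chain.2 ⟨S.verts.min'_mem hne, min_ancestor S hne μ hμ⟩

noncomputable def entry (S : ITree) (t μ : ℕ) (h : (chain S t ∩ chain S μ).Nonempty) : ℕ :=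
  (chain S t ∩ chain S μ).max' h

lemma entry_mem {S : ITree} {t μ : ℕ} (h : (chain S t ∩ chain S μ).Nonempty) :
    entry S t μ h ∈ S.verts ∧ Ancestor S (entry S t μ h) t ∧ Ancestor S (entry S t μ h) μ := by
  have := (chain S t ∩ chain S μ).max'_mem h
  rw [Finset.mem_inter, mem_chain, mem_chain] at this
  exact ⟨this.1.1, this.1.2, this.2.2⟩

lemma entry_max {S : ITree} {t μ : ℕ} (ht : t ∈ S.verts) (h : (chain S t ∩ chain S μ).Nonempty)
    {w : ℕ} (hwt : Ancestor S w t) (hwμ : Ancestor S w μ) : w ≤ entry S t μ h := by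
  refine Finset.le_max' _ w (Finset.mem_inter.2 ⟨?_, ?_⟩)
  · exact mem_chain.2 ⟨ancestor_mem hwt ht, hwt⟩
  · exact mem_chain.2 ⟨ancestor_mem hwt ht, hwμ⟩

section Side

variable {T S : ITree} {t : ℕ} {C : Finset ℕ}
variable (ht : t ∈ S.verts) (hS : S.verts ⊆ T.verts)
  (hcap : ∀ w ∈ S.verts, (w ∈ C ↔ Ancestor S w t))
  (hpar : ∀ w ∈ S.verts, w ∉ C → T.parent w = S.parent w)
  (hCanc : ∀ x ∈ C, ∀ c ∈ C, x ≤ c → Ancestor T x c)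

include ht hS hcap hpar hCanc

/-- If `μ` is off the chain `C` then it is not the minimum of `S.verts`, and its
`T`-parent equals its `S`-parent, which is a smaller vertex of `S`. -/
lemma off_chain_parent {μ : ℕ} (hμ : μ ∈ S.verts) (hμC : μ ∉ C) :
    T.parent μ = S.parent μ ∧ S.parent μ ∈ S.verts ∧ S.parent μ < μ := by
  have hmin : ¬ ∀ u ∈ S.verts, μ ≤ u := by
    intro hall
    have : μ = S.verts.min' ⟨t, ht⟩ :=
      le_antisymm (hall _ (S.verts.min'_mem _)) (S.verts.min'_le μ hμ)
    exact hμC ((hcap μ hμ).2 (this ▸ min_ancestor S ⟨t, ht⟩ t ht))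
  exact ⟨hpar μ hμ hμC, (S.parent_lt μ hμ hmin).1, (S.parent_lt μ hμ hmin).2⟩

/-- P3: ancestry in `S` from a chain vertex transfers to `T`. -/
lemma ancestor_transfer :
    ∀ μ, μ ∈ S.verts → ∀ x ∈ C, Ancestor S x μ → Ancestor T x μ := by
  intro μ
  induction μ using Nat.strong_induction_on with
  | _ μ ih =>
    intro hμ x hx hanc
    by_cases hμC : μ ∈ C
    · exact hCanc x hx μ hμC (ancestor_le hanc hμ)
    · have hne : x ≠ μ := fun h => hμC (h ▸ hx)
      obtain ⟨hTp, hpmem, hplt⟩ := off_chain_parent ht hS hcap hpar hCanc hμ hμC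
      have h1 : Ancestor T x (S.parent μ) :=
        ih _ hplt hpmem x hx (ancestor_peel hanc hne)
      exact ancestor_trans h1 (hTp ▸ ancestor_parent T μ)

/-- P4: any chain vertex that is a `T`-ancestor of `μ` lies below the entry point. -/
lemma le_entry :
    ∀ μ, ∀ hμ : μ ∈ S.verts, ∀ w ∈ C, Ancestor T w μ →
      w ≤ entry S t μ (chain_inter_ne S ht hμ) := by
  intro μ
  induction μ using Nat.strong_induction_on with
  | _ μ ih =>
    intro hμ w hw hanc
    by_cases hμC : μ ∈ C
    · have hμe : μ ≤ entry S t μ (chain_inter_ne S ht hμ) :=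
        entry_max ht _ ((hcap μ hμ).1 hμC) (ancestor_refl S μ)
      exact le_trans (ancestor_le hanc (hS hμ)) hμe
    · have hne : w ≠ μ := fun h => hμC (h ▸ hw)
      obtain ⟨hTp, hpmem, hplt⟩ := off_chain_parent ht hS hcap hpar hCanc hμ hμC
      have h1 : Ancestor T w (S.parent μ) := by
        have := ancestor_peel hanc hne; rwa [hTp] at this
      have h2 := ih _ hplt hpmem w hw h1
      refine le_trans h2 ?_
      refine Finset.max'_subset _ (Finset.inter_subset_inter_left ?_)
      intro x hx
      rw [mem_chain] at hx ⊢
      exact ⟨hx.1, ancestor_trans hx.2 (ancestor_parent S μ)⟩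

end Side

lemma side_iff (π : Finset (Finset ℕ)) {T S : ITree} {t m₁ : ℕ} {C : Finset ℕ}
    (ht : t ∈ S.verts) (hS : S.verts ⊆ T.verts)
    (hcap : ∀ w ∈ S.verts, (w ∈ C ↔ Ancestor S w t))
    (hpar : ∀ w ∈ S.verts, w ∉ C → T.parent w = S.parent w)
    (hCanc : ∀ x ∈ C, ∀ c ∈ C, x ≤ c → Ancestor T x c)
    (hm₁anc : ∀ x, Ancestor T x m₁ ↔ x ∈ C)
    (hside : ∀ B ∈ π, ∀ b ∈ B, b ∈ S.verts → B ⊆ S.verts)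
    {B B' : Finset ℕ} (hBS : B ⊆ S.verts) :
    DepEdge π T m₁ B B' ↔ DepEdge π S t B B' := by
  constructor
  · rintro ⟨hBπ, hB'π, hBT, hB'T, hB, hnanc, a, haB', hat, haμ, hamax⟩
    have hμS : B.max' hB ∈ S.verts := hBS (B.max'_mem hB)
    have hne := chain_inter_ne S ht hμS
    have heC : entry S t _ hne ∈ C :=
      (hcap _ (entry_mem hne).1).2 (entry_mem hne).2.1
    have heTm : Ancestor T (entry S t _ hne) m₁ := (hm₁anc _).2 heC
    have heTμ : Ancestor T (entry S t _ hne) (B.max' hB) :=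
      ancestor_transfer ht hS hcap hpar hCanc _ hμS _ heC (entry_mem hne).2.2
    have hemax : ∀ w, Ancestor T w m₁ → Ancestor T w (B.max' hB) → w ≤ entry S t _ hne :=
      fun w hw1 hw2 => le_entry ht hS hcap hpar hCanc _ hμS w ((hm₁anc w).1 hw1) hw2
    have hae : a = entry S t _ hne := le_antisymm (hemax a hat haμ) (hamax _ heTm heTμ)
    refine ⟨hBπ, hB'π, hBS, hside B' hB'π a haB' (hae ▸ (entry_mem hne).1), hB, ?_,
      a, haB', ?_, ?_, ?_⟩
    · intro hanc; exact hnanc ((hm₁anc _).2 ((hcap _ hμS).2 hanc))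
    · rw [hae]; exact (entry_mem hne).2.1
    · rw [hae]; exact (entry_mem hne).2.2
    · intro w hwt hwμ; rw [hae]; exact entry_max ht hne hwt hwμ
  · rintro ⟨hBπ, hB'π, hBSv, hB'Sv, hB, hnanc, a, haB', hat, haμ, hamax⟩
    have hμS : B.max' hB ∈ S.verts := hBSv (B.max'_mem hB)
    have hne := chain_inter_ne S ht hμS
    have heC : entry S t _ hne ∈ C :=
      (hcap _ (entry_mem hne).1).2 (entry_mem hne).2.1
    have heTm : Ancestor T (entry S t _ hne) m₁ := (hm₁anc _).2 heC
    have heTμ : Ancestor T (entry S t _ hne) (B.max' hB) :=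
      ancestor_transfer ht hS hcap hpar hCanc _ hμS _ heC (entry_mem hne).2.2
    have hemax : ∀ w, Ancestor T w m₁ → Ancestor T w (B.max' hB) → w ≤ entry S t _ hne :=
      fun w hw1 hw2 => le_entry ht hS hcap hpar hCanc _ hμS w ((hm₁anc w).1 hw1) hw2
    have hae : a = entry S t _ hne :=
      le_antisymm (entry_max ht hne hat haμ)
        (hamax _ (entry_mem hne).2.1 (entry_mem hne).2.2)
    refine ⟨hBπ, hB'π, hBSv.trans hS, hB'Sv.trans hS, hB, ?_, a, haB', ?_, ?_, ?_⟩
    · intro h; exact hnanc ((hcap _ hμS).1 ((hm₁anc _).1 h))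
    · rw [hae]; exact heTm
    · rw [hae]; exact heTμ
    · intro w hw1 hw2; rw [hae]; exact hemax w hw1 hw2

/-- **Lemma 3.5(a) of Féray–Goulden–Lascoux.**  Let `T₁`, `T₂` be
`π`-increasing trees with disjoint vertex sets and maximum vertices `m₁`,
`m₂`, with `T₁` irreducible, and let `v₂` be a vertex of `T₂` with
`v₂ < m₁`.  If `m₁ > m₂`, then `T = splice(T₁, m₁; T₂, v₂)` is reducible;
more precisely, its `m₁`-dependence graph is the disjoint union of the
`m₁`-dependence graph of `T₁` and the `v₂`-dependence graph of `T₂`. -/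
theorem splice_reducible (π : Finset (Finset ℕ)) (T₁ T₂ T : ITree) (m₁ m₂ v₂ : ℕ)
    (hπ : IsPartition π) (h₁ : PiIncreasing π T₁) (h₂ : PiIncreasing π T₂)
    (hdisj : Disjoint T₁.verts T₂.verts)
    (hm₁ : m₁ ∈ T₁.verts) (hm₁max : ∀ u ∈ T₁.verts, u ≤ m₁)
    (hm₂ : m₂ ∈ T₂.verts) (hm₂max : ∀ u ∈ T₂.verts, u ≤ m₂)
    (hirr₁ : DepConnected π T₁ m₁)
    (hv₂ : v₂ ∈ T₂.verts) (hv₂lt : v₂ < m₁) (hm : m₂ < m₁)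
    (hspl : IsSplice T₁ m₁ T₂ v₂ T) :
    ¬ DepConnected π T m₁ ∧
    (∀ B B' : Finset ℕ,
      DepEdge π T m₁ B B' ↔ (DepEdge π T₁ m₁ B B' ∨ DepEdge π T₂ v₂ B B')) := by
  obtain ⟨hTverts, hpar₁, hpar₂, hspl4⟩ := hspl
  set C : Finset ℕ := chain T₁ m₁ ∪ chain T₂ v₂ with hCdef
  have hS₁ : T₁.verts ⊆ T.verts := by rw [hTverts]; exact Finset.subset_union_left
  have hS₂ : T₂.verts ⊆ T.verts := by rw [hTverts]; exact Finset.subset_union_right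
  have hC1 : chain T₁ m₁ ⊆ T₁.verts := Finset.filter_subset _ _
  have hC2 : chain T₂ v₂ ⊆ T₂.verts := Finset.filter_subset _ _
  have hCsub : C ⊆ T.verts := by
    rw [hCdef]
    exact Finset.union_subset (hC1.trans hS₁) (hC2.trans hS₂)
  have hm₁C : m₁ ∈ C :=
    Finset.mem_union_left _ (mem_chain.2 ⟨hm₁, ancestor_refl T₁ m₁⟩)
  have hCle : ∀ c ∈ C, c ≤ m₁ := by
    intro c hc
    rcases Finset.mem_union.1 hc with h | h
    · exact hm₁max c (hC1 h)
    · exact le_trans (hm₂max c (hC2 h)) (le_of_lt hm)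
  have hTne : T.verts.Nonempty := ⟨m₁, hS₁ hm₁⟩
  have hminC : T.verts.min' hTne ∈ C := by
    have hmem : T.verts.min' hTne ∈ T₁.verts ∪ T₂.verts := by
      rw [← hTverts]; exact T.verts.min'_mem hTne
    rcases Finset.mem_union.1 hmem with h | h
    · have : T.verts.min' hTne = T₁.verts.min' ⟨m₁, hm₁⟩ := by
        refine le_antisymm (T.verts.min'_le _ (hS₁ (T₁.verts.min'_mem _))) ?_
        exact T₁.verts.min'_le _ h
      rw [this]
      exact Finset.mem_union_left _
        (mem_chain.2 ⟨T₁.verts.min'_mem _, min_ancestor T₁ _ m₁ hm₁⟩)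
    · have : T.verts.min' hTne = T₂.verts.min' ⟨v₂, hv₂⟩ := by
        refine le_antisymm (T.verts.min'_le _ (hS₂ (T₂.verts.min'_mem _))) ?_
        exact T₂.verts.min'_le _ h
      rw [this]
      exact Finset.mem_union_right _
        (mem_chain.2 ⟨T₂.verts.min'_mem _, min_ancestor T₂ _ v₂ hv₂⟩)
  have hstep : ∀ c ∈ C, T.parent c ∈ C ∧ T.parent c ≤ c := by
    intro c hc
    by_cases hf : (C.filter (· < c)).Nonempty
    · rw [hspl4 c hc hf]
      have := (C.filter (· < c)).max'_mem hf
      rw [Finset.mem_filter] at this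
      exact ⟨this.1, le_of_lt this.2⟩
    · have hcall : ∀ x ∈ C, c ≤ x := by
        intro x hx
        by_contra hlt
        exact hf ⟨x, Finset.mem_filter.2 ⟨hx, by omega⟩⟩
      have hcmin : c = T.verts.min' hTne :=
        le_antisymm (hcall _ hminC) (T.verts.min'_le _ (hCsub hc))
      have : T.parent c = c :=
        T.parent_root c (hCsub hc) (by rw [hcmin]; exact fun u hu => T.verts.min'_le u hu)
      rw [this]; exact ⟨hc, le_refl c⟩
  have hCanc : ∀ x ∈ C, ∀ c ∈ C, x ≤ c → Ancestor T x c := by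
    intro x hx c
    induction c using Nat.strong_induction_on with
    | _ c ih =>
      intro hc hxc
      rcases eq_or_lt_of_le hxc with heq | hlt
      · exact heq ▸ ancestor_refl T x
      · have hf : (C.filter (· < c)).Nonempty := ⟨x, Finset.mem_filter.2 ⟨hx, hlt⟩⟩
        have hpeq : T.parent c = (C.filter (· < c)).max' hf := hspl4 c hc hf
        have hpmem := (C.filter (· < c)).max'_mem hf
        rw [Finset.mem_filter] at hpmem
        have hxp : x ≤ (C.filter (· < c)).max' hf :=
          Finset.le_max' (C.filter (· < c)) x (Finset.mem_filter.2 ⟨hx, hlt⟩)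
        exact ancestor_trans (ih _ hpmem.2 hpmem.1 hxp) (hpeq ▸ ancestor_parent T c)
  have hm₁anc : ∀ x, Ancestor T x m₁ ↔ x ∈ C := by
    intro x
    constructor
    · rintro ⟨k, rfl⟩
      induction k with
      | zero => exact hm₁C
      | succ n ihn =>
        rw [Function.iterate_succ_apply']
        exact (hstep _ ihn).1
    · intro hx; exact hCanc x hx m₁ hm₁C (hCle x hx)
  have hcap₁ : ∀ w ∈ T₁.verts, (w ∈ C ↔ Ancestor T₁ w m₁) := by
    intro w hw
    constructor
    · intro hwc
      rcases Finset.mem_union.1 hwc with h | h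
      · exact (mem_chain.1 h).2
      · exact absurd (hC2 h) (Finset.disjoint_left.1 hdisj hw)
    · intro h; exact Finset.mem_union_left _ (mem_chain.2 ⟨hw, h⟩)
  have hcap₂ : ∀ w ∈ T₂.verts, (w ∈ C ↔ Ancestor T₂ w v₂) := by
    intro w hw
    constructor
    · intro hwc
      rcases Finset.mem_union.1 hwc with h | h
      · exact absurd (hC1 h) (Finset.disjoint_right.1 hdisj hw)
      · exact (mem_chain.1 h).2
    · intro h; exact Finset.mem_union_right _ (mem_chain.2 ⟨hw, h⟩)
  have hside₁ : ∀ B ∈ π, ∀ b ∈ B, b ∈ T₁.verts → B ⊆ T₁.verts := by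
    intro B hB b hb hbv
    obtain ⟨B'', hB''π, hbB'', hB''sub⟩ := h₁.1 b hbv
    rcases eq_or_ne B B'' with rfl | hne
    · exact hB''sub
    · exact absurd hbB'' (Finset.disjoint_left.1 (hπ.2.2 B hB B'' hB''π hne) hb)
  have hside₂ : ∀ B ∈ π, ∀ b ∈ B, b ∈ T₂.verts → B ⊆ T₂.verts := by
    intro B hB b hb hbv
    obtain ⟨B'', hB''π, hbB'', hB''sub⟩ := h₂.1 b hbv
    rcases eq_or_ne B B'' with rfl | hne
    · exact hB''sub
    · exact absurd hbB'' (Finset.disjoint_left.1 (hπ.2.2 B hB B'' hB''π hne) hb)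
  have hiff : ∀ B B' : Finset ℕ,
      DepEdge π T m₁ B B' ↔ (DepEdge π T₁ m₁ B B' ∨ DepEdge π T₂ v₂ B B') := by
    intro B B'
    constructor
    · intro h
      obtain ⟨b, hb⟩ := hπ.1 B h.1
      have hbT : b ∈ T.verts := h.2.2.1 hb
      rw [hTverts, Finset.mem_union] at hbT
      rcases hbT with hb1 | hb2
      · exact Or.inl ((side_iff π hm₁ hS₁ hcap₁ hpar₁ hCanc hm₁anc hside₁
          (hside₁ B h.1 b hb hb1)).1 h)
      · exact Or.inr ((side_iff π hv₂ hS₂ hcap₂ hpar₂ hCanc hm₁anc hside₂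
          (hside₂ B h.1 b hb hb2)).1 h)
    · rintro (h | h)
      · exact (side_iff π hm₁ hS₁ hcap₁ hpar₁ hCanc hm₁anc hside₁ h.2.2.1).2 h
      · exact (side_iff π hv₂ hS₂ hcap₂ hpar₂ hCanc hm₁anc hside₂ h.2.2.1).2 h
  refine ⟨?_, hiff⟩
  intro hcon
  obtain ⟨B₁, hB₁π, hm₁B₁, hB₁sub⟩ := h₁.1 m₁ hm₁
  obtain ⟨B₂, hB₂π, hv₂B₂, hB₂sub⟩ := h₂.1 v₂ hv₂
  have hnot : ∀ Z ∈ π, Z ⊆ T₂.verts → ¬ Z ⊆ T₁.verts := by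
    intro Z hZ h2 h1
    obtain ⟨z, hz⟩ := hπ.1 Z hZ
    exact Finset.disjoint_left.1 hdisj (h1 hz) (h2 hz)
  have hinv : ∀ X Y : Finset ℕ, Relation.EqvGen (DepEdge π T m₁) X Y →
      (X ⊆ T₁.verts ↔ Y ⊆ T₁.verts) := by
    intro X Y h
    induction h with
    | rel X Y hXY =>
      rcases (hiff X Y).1 hXY with h | h
      · exact iff_of_true h.2.2.1 h.2.2.2.1
      · exact iff_of_false (hnot X h.1 h.2.2.1) (hnot Y h.2.1 h.2.2.2.1)
    | refl X => exact Iff.rfl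
    | symm _ _ _ ih => exact ih.symm
    | trans _ _ _ _ _ ih1 ih2 => exact ih1.trans ih2
  have hB₂T₁ : B₂ ⊆ T₁.verts :=
    (hinv B₁ B₂ (hcon B₁ hB₁π (hB₁sub.trans hS₁) B₂ hB₂π (hB₂sub.trans hS₂))).1 hB₁sub
  exact hnot B₂ hB₂π hB₂sub hB₂T₁
end
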